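/- For a rational number a with a ≠ ±1 and a ≠ 0, the point (4a, 4a(a^2-1)) on the elliptic curve E_a : v^2 = u^3 + (a^4-4a^3-2a^2-4a+1)u^2 + 16a^4 u is a point of order exactly 8. -/

import Mathlib

/-- The Weierstrass curve `E_a : v² = u³ + (a⁴-4a³-2a²-4a+1)u² + 16a⁴u` over `ℚ`. -/
def Ecurve (a : ℚ) : WeierstrassCurve.Affine ℚ :=
  { a₁ := 0, a₂ := a ^ 4 - 4 * a ^ 3 - 2 * a ^ 2 - 4 * a + 1, a₃ := 0,
    a₄ := 16 * a ^ 4, a₆ := 0 }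

open WeierstrassCurve.Affine WeierstrassCurve.Affine.Point

lemma some_eq_some {W : WeierstrassCurve.Affine ℚ} {x₁ y₁ x₂ y₂ : ℚ}
    (hx : x₁ = x₂) (hy : y₁ = y₂) (h₁ : W.Nonsingular x₁ y₁) (h₂ : W.Nonsingular x₂ y₂) :
    Point.some _ _ h₁ = Point.some _ _ h₂ := by subst hx; subst hy; rfl

theorem stmt_6 (a : ℚ) (ha0 : a ≠ 0) (ha1 : a ≠ 1) (ha1' : a ≠ -1)
    (h : (Ecurve a).Nonsingular (4 * a) (4 * a * (a ^ 2 - 1))) :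
    addOrderOf (WeierstrassCurve.Affine.Point.some _ _ h) = 8 := by
  have ha1s : a - 1 ≠ 0 := sub_ne_zero.mpr ha1
  have ha1s' : a + 1 ≠ 0 := by intro hc; apply ha1'; linarith
  -- 2-torsion point (0,0)
  have hR : (Ecurve a).Nonsingular 0 0 := by
    rw [nonsingular_zero]
    refine ⟨rfl, Or.inr ?_⟩
    show (16 * a ^ 4 : ℚ) ≠ 0
    positivity
  -- the point 2P = (4a², -4a²(a-1)²)
  have hQ : (Ecurve a).Nonsingular (4 * a ^ 2) (-(4 * a ^ 2 * (a - 1) ^ 2)) := by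
    rw [nonsingular_iff]
    constructor
    · rw [equation_iff]; simp only [Ecurve]; ring
    · right
      show (-(4 * a ^ 2 * (a - 1) ^ 2) : ℚ) ≠ -(-(4 * a ^ 2 * (a - 1) ^ 2)) - 0 * _ - 0
      intro hc
      have : (8 : ℚ) * a ^ 2 * (a - 1) ^ 2 = 0 := by linarith
      simpa [ha0, ha1s] using this
  have hy1 : (4 * a * (a ^ 2 - 1) : ℚ) ≠ (Ecurve a).negY (4 * a) (4 * a * (a ^ 2 - 1)) := by
    show _ ≠ -(4 * a * (a ^ 2 - 1)) - 0 * _ - 0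
    intro hc
    have : (8 : ℚ) * a * (a + 1) * (a - 1) = 0 := by linarith [hc]; 
    simpa [ha0, ha1s, ha1s'] using this
  have hy2 : (-(4 * a ^ 2 * (a - 1) ^ 2) : ℚ) ≠
      (Ecurve a).negY (4 * a ^ 2) (-(4 * a ^ 2 * (a - 1) ^ 2)) := by
    show _ ≠ -(-(4 * a ^ 2 * (a - 1) ^ 2)) - 0 * _ - 0
    intro hc
    have : (8 : ℚ) * a ^ 2 * (a - 1) ^ 2 = 0 := by linarith
    simpa [ha0, ha1s] using this
  -- slopes
  have hden1 : (4 * a * (a ^ 2 - 1) : ℚ) -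
      (Ecurve a).negY (4 * a) (4 * a * (a ^ 2 - 1)) ≠ 0 := sub_ne_zero.mpr hy1
  have hden2 : (-(4 * a ^ 2 * (a - 1) ^ 2) : ℚ) -
      (Ecurve a).negY (4 * a ^ 2) (-(4 * a ^ 2 * (a - 1) ^ 2)) ≠ 0 := sub_ne_zero.mpr hy2
  have hL1 : (Ecurve a).slope (4 * a) (4 * a) (4 * a * (a ^ 2 - 1)) (4 * a * (a ^ 2 - 1))
      = a ^ 2 - 2 * a - 1 := by
    rw [slope_of_Y_ne rfl hy1, div_eq_iff hden1]
    show (3 * (4 * a) ^ 2 + 2 * (a ^ 4 - 4 * a ^ 3 - 2 * a ^ 2 - 4 * a + 1) * (4 * a)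
      + 16 * a ^ 4 - 0 * _ : ℚ) = _ * (_ - (-(4 * a * (a ^ 2 - 1)) - 0 * (4 * a) - 0))
    ring
  have hL2 : (Ecurve a).slope (4 * a ^ 2) (4 * a ^ 2) (-(4 * a ^ 2 * (a - 1) ^ 2))
      (-(4 * a ^ 2 * (a - 1) ^ 2)) = -((a - 1) ^ 2) := by
    rw [slope_of_Y_ne rfl hy2, div_eq_iff hden2]
    show (3 * (4 * a ^ 2) ^ 2 + 2 * (a ^ 4 - 4 * a ^ 3 - 2 * a ^ 2 - 4 * a + 1) * (4 * a ^ 2)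
      + 16 * a ^ 4 - 0 * _ : ℚ)
      = _ * (_ - (-(-(4 * a ^ 2 * (a - 1) ^ 2)) - 0 * (4 * a ^ 2) - 0))
    ring
  set P := WeierstrassCurve.Affine.Point.some _ _ h with hP
  have e2 : P + P = Point.some _ _ hQ := by
    rw [add_self_of_Y_ne hy1]
    apply some_eq_some
    · rw [addX, hL1]; show _ - (a ^ 4 - 4 * a ^ 3 - 2 * a ^ 2 - 4 * a + 1) - _ - _ = _; simp only [Ecurve]; ring
    · rw [addY, negAddY, addX, hL1]
      show -(_ * (_ - (a ^ 4 - 4 * a ^ 3 - 2 * a ^ 2 - 4 * a + 1) - _ - _ - _) + _)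
        - 0 * _ - 0 = _
      simp only [Ecurve]; ring
  have e4 : Point.some _ _ hQ + Point.some _ _ hQ = Point.some _ _ hR := by
    rw [add_self_of_Y_ne hy2]
    apply some_eq_some
    · rw [addX, hL2]; show _ - (a ^ 4 - 4 * a ^ 3 - 2 * a ^ 2 - 4 * a + 1) - _ - _ = _; simp only [Ecurve]; ring
    · rw [addY, negAddY, addX, hL2]
      show -(_ * (_ - (a ^ 4 - 4 * a ^ 3 - 2 * a ^ 2 - 4 * a + 1) - _ - _ - _) + _)
        - 0 * _ - 0 = _
      simp only [Ecurve]; ring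
  have e8 : Point.some _ _ hR + Point.some _ _ hR = (0 : (Ecurve a).Point) :=
    add_of_Y_eq rfl (by show (0 : ℚ) = -0 - 0 * 0 - 0; ring)
  have s2 : (2 : ℕ) • P = Point.some _ _ hQ := by rw [two_smul]; exact e2
  have s4 : (4 : ℕ) • P = Point.some _ _ hR := by
    rw [show (4 : ℕ) = 2 * 2 from rfl, mul_smul, s2, two_smul]; exact e4
  have s8 : (8 : ℕ) • P = 0 := by
    rw [show (8 : ℕ) = 2 * 4 from rfl, mul_smul, s4, two_smul]; exact e8
  have : addOrderOf P = 2 ^ (2 + 1) := by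
    apply addOrderOf_eq_prime_pow (p := 2) (n := 2)
    · rw [show (2 ^ 2 : ℕ) = 4 from rfl, s4]
      exact some_ne_zero hR
    · rw [show (2 ^ (2 + 1) : ℕ) = 8 from rfl]; exact s8
  simpa using this
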